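/- Let σ be the multiset of complex roots of the Wronskian polynomial W, counted with multiplicity. Then all roots are nonzero and the two trace formulas hold: Σ_{λ∈σ} 1/λ = Σ_{n=1}^N ω_n and Σ_{λ∈σ} 1/λ² = Σ_{n=1}^N Σ_{k=1}^N e^{−|x_n − x_k|} ω_n ω_k + 2 Σ_{n=1}^N υ_n. -/

import Mathlib

open scoped BigOperators

/-- Transfer matrix across an interval of length `d` for `-f'' + (1/4) f = 0`. -/
noncomputable def Tmat (d : ℝ) : Matrix (Fin 2) (Fin 2) ℂ :=
  !![Complex.cosh ((d : ℂ) / 2), 2 * Complex.sinh ((d : ℂ) / 2);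
     (1 / 2) * Complex.sinh ((d : ℂ) / 2), Complex.cosh ((d : ℂ) / 2)]

/-- Interface matrix at a point carrying weight `w` and dipole `v`. -/
noncomputable def Omat (w v : ℝ) (z : ℂ) : Matrix (Fin 2) (Fin 2) ℂ :=
  !![1, 0; -(z * (w : ℂ) + z ^ 2 * (v : ℂ)), 1]

/-- The value `(φ₋(z, x_N+), φ₋'(z, x_N+))` obtained by propagating the initial data
`(e^{x_0/2}, (1/2) e^{x_0/2})` through all the point interactions (0-indexed data). -/
noncomputable def transVec (N : ℕ) (x w v : ℕ → ℝ) (z : ℂ) : Fin 2 → ℂ :=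
  Matrix.mulVec
    ((((List.range (N - 1)).reverse.map
        (fun j => Omat (w (j + 1)) (v (j + 1)) z * Tmat (x (j + 1) - x j))).prod)
      * Omat (w 0) (v 0) z)
    ![Complex.exp ((x 0 : ℂ) / 2), (1 / 2) * Complex.exp ((x 0 : ℂ) / 2)]

/-- The Wronskian polynomial `W(z)` of the generalized spectral problem
`-f'' + (1/4) f = z ω f + z² υ f` (`W ≡ 1` when `N = 0`). -/
noncomputable def Wron (N : ℕ) (x w v : ℕ → ℝ) (z : ℂ) : ℂ :=
  if N = 0 then 1
  else Complex.exp (-(x (N - 1) : ℂ) / 2) *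
    (transVec N x w v z 1 + (1 / 2) * transVec N x w v z 0)

/-- The Weyl--Titchmarsh function `M(z)`. -/
noncomputable def WeylM (N : ℕ) (x w v : ℕ → ℝ) (z : ℂ) : ℂ :=
  Complex.exp ((x (N - 1) : ℂ) / 2) *
    ((1 / 2) * transVec N x w v z 0 - transVec N x w v z 1) / Wron N x w v z

/-- `f` (with distributional derivative represented by `f'`) is a solution at `z` of the
generalized spectral problem `-f'' + (1/4) f = z ω f + z² υ f` with
`ω = Σ_{n<N} w n δ_{x n}`, `υ = Σ_{n<N} v n δ_{x n}`: it is continuous, twice differentiable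
away from the points `x n` with `f'' = (1/4) f` there, and the one-sided limits of `f'` at
each `x n` exist and satisfy the jump condition
`f'(x_n+) - f'(x_n-) = -(z w_n + z² v_n) f (x_n)`. -/
def IsSol (N : ℕ) (x w v : ℕ → ℝ) (z : ℂ) (f f' : ℝ → ℂ) : Prop :=
  Continuous f ∧
  (∀ t : ℝ, (∀ n < N, t ≠ x n) →
    HasDerivAt f (f' t) t ∧ HasDerivAt f' ((1 / 4) * f t) t) ∧
  (∀ n < N, ∃ L R : ℂ,
    Filter.Tendsto f' (nhdsWithin (x n) (Set.Iio (x n))) (nhds L) ∧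
    Filter.Tendsto f' (nhdsWithin (x n) (Set.Ioi (x n))) (nhds R) ∧
    R - L = -(z * (w n : ℂ) + z ^ 2 * (v n : ℂ)) * f (x n))



section TraceHelpers
open Polynomial

lemma ccosh_eq (t : ℂ) : Complex.cosh t = (Complex.exp t + Complex.exp (-t)) / 2 := by
  rw [← Complex.cosh_add_sinh t, ← Complex.cosh_sub_sinh t]; ring

lemma csinh_eq (t : ℂ) : Complex.sinh t = (Complex.exp t - Complex.exp (-t)) / 2 := by
  rw [← Complex.cosh_add_sinh t, ← Complex.cosh_sub_sinh t]; ring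


noncomputable def sPol (w v : ℝ) : Polynomial ℂ := C (w : ℂ) * X + C (v : ℂ) * X ^ 2

noncomputable def abP (x w v : ℕ → ℝ) : ℕ → Polynomial ℂ × Polynomial ℂ
  | 0 => (C (Complex.exp ((x 0 : ℂ) / 2)) - sPol (w 0) (v 0) * C (Complex.exp ((x 0 : ℂ) / 2)),
          sPol (w 0) (v 0) * C (Complex.exp ((x 0 : ℂ) / 2)))
  | (n + 1) =>
      let a := C (Complex.exp (((x (n + 1) : ℂ) - (x n : ℂ)) / 2)) * (abP x w v n).1
      let b := C (Complex.exp (-(((x (n + 1) : ℂ) - (x n : ℂ)) / 2))) * (abP x w v n).2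
      (a - sPol (w (n + 1)) (v (n + 1)) * (a + b),
       b + sPol (w (n + 1)) (v (n + 1)) * (a + b))


lemma transVec_eq (x w v : ℕ → ℝ) (z : ℂ) (n : ℕ) :
    transVec (n + 1) x w v z =
      ![((abP x w v n).1.eval z) + ((abP x w v n).2.eval z),
        ((abP x w v n).1.eval z) / 2 - ((abP x w v n).2.eval z) / 2] := by
  induction n with
  | zero =>
      funext i
      fin_cases i <;>
        simp [transVec, abP, sPol, Omat, Matrix.mulVec, dotProduct,
          Fin.sum_univ_two, Matrix.one_apply] <;> ring
  | succ n ih =>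
      have hlist : transVec (n + 2) x w v z =
          (Omat (w (n + 1)) (v (n + 1)) z * Tmat (x (n + 1) - x n)).mulVec
            (transVec (n + 1) x w v z) := by
        have h21 : n + 2 - 1 = n + 1 := rfl
        have h11 : n + 1 - 1 = n := rfl
        simp only [transVec, h21, h11, List.range_succ, List.reverse_append,
          List.map_append, List.map_cons, List.prod_cons, List.map_nil,
          List.reverse_cons, List.reverse_nil, List.nil_append, List.cons_append,
          List.prod_append, Matrix.mulVec_mulVec, mul_assoc]
      rw [hlist, ih]
      funext i
      fin_cases i <;>
      · simp [abP, sPol, Omat, Tmat, Matrix.mulVec, dotProduct,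
          Fin.sum_univ_two, Matrix.mul_apply, ccosh_eq, csinh_eq]
        push_cast
        ring

lemma Wron_eq (N : ℕ) (hN : 1 ≤ N) (x w v : ℕ → ℝ) (z : ℂ) :
    Wron N x w v z =
      Complex.exp (-(x (N - 1) : ℂ) / 2) * (abP x w v (N - 1)).1.eval z := by
  obtain ⟨n, rfl⟩ : ∃ n, N = n + 1 := ⟨N - 1, (Nat.succ_pred_eq_of_pos hN).symm⟩
  rw [Wron, if_neg (Nat.succ_ne_zero n), transVec_eq]
  simp only [Nat.add_sub_cancel, Matrix.cons_val_one, Matrix.head_cons, Matrix.cons_val_zero]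
  ring

lemma sPol_mul_coeff (a b : ℝ) (f : Polynomial ℂ) :
    (sPol a b * f).coeff 0 = 0 ∧
    (sPol a b * f).coeff 1 = a * f.coeff 0 ∧
    (sPol a b * f).coeff 2 = a * f.coeff 1 + b * f.coeff 0 := by
  have h : sPol a b * f = C (a : ℂ) * (X * f) + C (b : ℂ) * (X * (X * f)) := by
    rw [sPol]; ring
  rw [h]
  simp only [Polynomial.coeff_add, Polynomial.coeff_C_mul]
  have h0 : (X * f : Polynomial ℂ).coeff 0 = 0 := by simp [Polynomial.coeff_X_mul]
  have h00 : (X * (X * f) : Polynomial ℂ).coeff 0 = 0 := by simp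
  refine ⟨by rw [h0, h00]; ring, ?_, ?_⟩
  · rw [Polynomial.coeff_X_mul, show (1:ℕ) = 0 + 1 from rfl, Polynomial.coeff_X_mul, h0]; ring
  · rw [show (2:ℕ) = 1 + 1 from rfl, Polynomial.coeff_X_mul, Polynomial.coeff_X_mul,
      Polynomial.coeff_X_mul]; try ring

lemma abP_coeff (x w v : ℕ → ℝ) (n : ℕ) :
    (abP x w v n).2.coeff 0 = 0 ∧
    (abP x w v n).1.coeff 0 = Complex.exp ((x n : ℂ) / 2) ∧
    (abP x w v n).1.coeff 1 =
      -Complex.exp ((x n : ℂ) / 2) * (∑ k ∈ Finset.range (n + 1), (w k : ℂ)) ∧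
    (abP x w v n).2.coeff 1 =
      Complex.exp (-((x n : ℂ) / 2)) *
        (∑ k ∈ Finset.range (n + 1), (w k : ℂ) * Complex.exp (x k)) ∧
    (abP x w v n).1.coeff 2 =
      Complex.exp ((x n : ℂ) / 2) *
        ((∑ k ∈ Finset.range (n + 1), ∑ j ∈ Finset.range k,
            (w k : ℂ) * w j * (1 - Complex.exp ((x j : ℂ) - x k)))
          - ∑ k ∈ Finset.range (n + 1), (v k : ℂ)) := by
  induction n with
  | zero =>
      obtain ⟨s0, s1, s2⟩ := sPol_mul_coeff (w 0) (v 0) (C (Complex.exp ((x 0 : ℂ) / 2)))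
      have he : Complex.exp (-((x 0 : ℂ) / 2)) * Complex.exp ((x 0 : ℂ)) =
          Complex.exp ((x 0 : ℂ) / 2) := by
        rw [← Complex.exp_add]; congr 1; ring
      refine ⟨?_, ?_, ?_, ?_, ?_⟩
      · simp only [abP, s0]
      · simp only [abP, Polynomial.coeff_sub, s0, Polynomial.coeff_C]
        norm_num
      · simp only [abP, Polynomial.coeff_sub, s1, Polynomial.coeff_C]
        norm_num
        try ring
      · simp only [abP, s1, Polynomial.coeff_C]
        norm_num
        linear_combination (w 0 : ℂ) * he.symm
      · simp only [abP, Polynomial.coeff_sub, s2, Polynomial.coeff_C]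
        norm_num
        try ring
  | succ n ih =>
      obtain ⟨b0, a0, a1, b1, a2⟩ := ih
      set E₁ := Complex.exp (((x (n + 1) : ℂ) - (x n : ℂ)) / 2) with hE₁
      set E₂ := Complex.exp (-(((x (n + 1) : ℂ) - (x n : ℂ)) / 2)) with hE₂
      set A := C E₁ * (abP x w v n).1 with hA
      set B := C E₂ * (abP x w v n).2 with hB
      obtain ⟨s0, s1, s2⟩ := sPol_mul_coeff (w (n + 1)) (v (n + 1)) (A + B)
      have habs : (abP x w v (n + 1)).1 = A - sPol (w (n + 1)) (v (n + 1)) * (A + B) ∧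
          (abP x w v (n + 1)).2 = B + sPol (w (n + 1)) (v (n + 1)) * (A + B) := ⟨rfl, rfl⟩
      have hEE : E₁ * Complex.exp ((x n : ℂ) / 2) = Complex.exp ((x (n + 1) : ℂ) / 2) := by
        rw [hE₁, ← Complex.exp_add]; congr 1; ring
      have hEE2 : E₂ * Complex.exp (-((x n : ℂ) / 2)) =
          Complex.exp (-((x (n + 1) : ℂ) / 2)) := by
        rw [hE₂, ← Complex.exp_add]; congr 1; ring
      have hFE : Complex.exp (-((x (n + 1) : ℂ) / 2)) * Complex.exp ((x (n + 1) : ℂ)) =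
          Complex.exp ((x (n + 1) : ℂ) / 2) := by
        rw [← Complex.exp_add]; congr 1; ring
      have hA0 : A.coeff 0 = Complex.exp ((x (n + 1) : ℂ) / 2) := by
        rw [hA, Polynomial.coeff_C_mul, a0, hEE]
      have hB0 : B.coeff 0 = 0 := by rw [hB, Polynomial.coeff_C_mul, b0, mul_zero]
      have hA1 : A.coeff 1 =
          -Complex.exp ((x (n + 1) : ℂ) / 2) * (∑ k ∈ Finset.range (n + 1), (w k : ℂ)) := by
        rw [hA, Polynomial.coeff_C_mul, a1]
        linear_combination (-(∑ k ∈ Finset.range (n + 1), (w k : ℂ))) * hEE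
      have hB1 : B.coeff 1 =
          Complex.exp (-((x (n + 1) : ℂ) / 2)) *
            (∑ k ∈ Finset.range (n + 1), (w k : ℂ) * Complex.exp (x k)) := by
        rw [hB, Polynomial.coeff_C_mul, b1, ← mul_assoc, hEE2]
      have hA2 : A.coeff 2 =
          Complex.exp ((x (n + 1) : ℂ) / 2) *
            ((∑ k ∈ Finset.range (n + 1), ∑ j ∈ Finset.range k,
                (w k : ℂ) * w j * (1 - Complex.exp ((x j : ℂ) - x k)))
              - ∑ k ∈ Finset.range (n + 1), (v k : ℂ)) := by
        rw [hA, Polynomial.coeff_C_mul, a2, ← mul_assoc, hEE]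
      refine ⟨?_, ?_, ?_, ?_, ?_⟩
      · rw [habs.2, Polynomial.coeff_add, s0, hB0, add_zero]
      · rw [habs.1, Polynomial.coeff_sub, s0, sub_zero, hA0]
      · rw [habs.1, Polynomial.coeff_sub, s1, Polynomial.coeff_add, hA0, hB0, add_zero, hA1,
          Finset.sum_range_succ (fun k => (w k : ℂ)) (n + 1)]
        ring
      · rw [habs.2, Polynomial.coeff_add, s1, Polynomial.coeff_add, hA0, hB0, add_zero, hB1,
          Finset.sum_range_succ (fun k => (w k : ℂ) * Complex.exp (x k)) (n + 1)]
        linear_combination (w (n + 1) : ℂ) * hFE.symm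
      · rw [habs.1, Polynomial.coeff_sub, s2, Polynomial.coeff_add A B 1,
          Polynomial.coeff_add A B 0, hA0, hB0, add_zero, hA1, hB1, hA2,
          Finset.sum_range_succ (fun k => ∑ j ∈ Finset.range k,
            (w k : ℂ) * w j * (1 - Complex.exp ((x j : ℂ) - x k))) (n + 1),
          Finset.sum_range_succ (fun k => (v k : ℂ)) (n + 1)]
        have hsum : ∑ j ∈ Finset.range (n + 1),
            (w (n + 1) : ℂ) * w j * (1 - Complex.exp ((x j : ℂ) - x (n + 1))) =
            (w (n + 1) : ℂ) * (∑ k ∈ Finset.range (n + 1), (w k : ℂ))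
            - (w (n + 1) : ℂ) * Complex.exp (-((x (n + 1) : ℂ)))
              * (∑ k ∈ Finset.range (n + 1), (w k : ℂ) * Complex.exp (x k)) := by
          have step : ∀ j ∈ Finset.range (n + 1),
              (w (n + 1) : ℂ) * w j * (1 - Complex.exp ((x j : ℂ) - x (n + 1))) =
              (w (n + 1) : ℂ) * (w j : ℂ) -
                (w (n + 1) : ℂ) * Complex.exp (-((x (n + 1) : ℂ))) *
                  ((w j : ℂ) * Complex.exp ((x j : ℂ))) := by
            intro j _
            have : Complex.exp ((x j : ℂ) - x (n + 1)) =
                Complex.exp (-((x (n + 1) : ℂ))) * Complex.exp ((x j : ℂ)) := by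
              rw [← Complex.exp_add]; congr 1; ring
            rw [this]; ring
          rw [Finset.sum_congr rfl step, Finset.sum_sub_distrib, ← Finset.mul_sum,
            ← Finset.mul_sum]
        rw [hsum]
        have hee : Complex.exp (-((x (n + 1) : ℂ) / 2)) =
            Complex.exp ((x (n + 1) : ℂ) / 2) * Complex.exp (-((x (n + 1) : ℂ))) := by
          rw [← Complex.exp_add]; congr 1; ring
        rw [hee]
        ring

lemma coeff_prod_one_sub (t : Multiset ℂ) :
    ((t.map fun μ => 1 - C μ * X).prod.coeff 0 = 1 ∧
     (t.map fun μ => 1 - C μ * X).prod.coeff 1 = -t.sum) ∧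
    (t.map fun μ => μ ^ 2).sum =
      ((t.map fun μ => 1 - C μ * X).prod.coeff 1) ^ 2 -
        2 * (t.map fun μ => 1 - C μ * X).prod.coeff 2 := by
  induction t using Multiset.induction_on with
  | empty => simp [Polynomial.coeff_one]
  | cons μ s ih =>
    obtain ⟨⟨h0, h1⟩, h2⟩ := ih
    set q := (s.map fun μ => 1 - C μ * X).prod with hq
    have hmul : ((μ ::ₘ s).map fun μ => 1 - C μ * X).prod = (1 - C μ * X) * q := by
      simp [hq]
    have key : ∀ k : ℕ, ((1 - C μ * X) * q).coeff (k + 1) = q.coeff (k + 1) - μ * q.coeff k := by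
      intro k
      have : (1 - C μ * X) * q = q - C μ * (X * q) := by ring
      rw [this, Polynomial.coeff_sub, Polynomial.coeff_C_mul, Polynomial.coeff_X_mul]
    have key0 : ((1 - C μ * X) * q).coeff 0 = q.coeff 0 := by
      have : (1 - C μ * X) * q = q - C μ * (X * q) := by ring
      rw [this, Polynomial.coeff_sub, Polynomial.coeff_C_mul]
      simp [Polynomial.coeff_X_mul]  -- (X*q).coeff 0 = 0
    refine ⟨⟨by rw [hmul, key0, h0], ?_⟩, ?_⟩
    · rw [hmul, key 0, h0, h1]; simp; ring
    · rw [hmul, key 0, key 1, h0]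
      simp only [Multiset.map_cons, Multiset.sum_cons]
      rw [h2, h1]; ring


lemma roots_sums (P : Polynomial ℂ) (h0 : P.coeff 0 = 1) :
    (0 : ℂ) ∉ P.roots ∧
    (P.roots.map fun lam => lam⁻¹).sum = -P.coeff 1 ∧
    (P.roots.map fun lam => (lam ^ 2)⁻¹).sum = P.coeff 1 ^ 2 - 2 * P.coeff 2 := by
  have hP0 : P ≠ 0 := fun h => by simp [h] at h0
  have hz : (0 : ℂ) ∉ P.roots := by
    intro h
    have := (Polynomial.mem_roots hP0).1 h
    rw [Polynomial.IsRoot, ← Polynomial.coeff_zero_eq_eval_zero, h0] at this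
    exact one_ne_zero this
  have hroots_ne : ∀ a ∈ P.roots, a ≠ 0 := fun a ha h => hz (h ▸ ha)
  -- factorization
  have hsplit := Polynomial.Splits.eq_prod_roots (IsAlgClosed.splits P)
  set t : Multiset ℂ := P.roots.map fun a => a⁻¹ with ht
  have hfac : ∀ a ∈ P.roots, (X - C a : ℂ[X]) = (-C a) * (1 - C a⁻¹ * X) := by
    intro a ha
    have h := hroots_ne a ha
    have hca : (C a : ℂ[X]) * C a⁻¹ = 1 := by rw [← C_mul, mul_inv_cancel₀ h, C_1]
    calc (X - C a : ℂ[X]) = -C a + (C a * C a⁻¹) * X := by rw [hca]; ring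
      _ = -C a * (1 - C a⁻¹ * X) := by ring
  have hmap : P.roots.map (fun a => (X - C a : ℂ[X])) =
      P.roots.map (fun a => (-C a) * (1 - C a⁻¹ * X)) :=
    Multiset.map_congr rfl hfac
  have hq : (P.roots.map (fun a => (X - C a : ℂ[X]))).prod =
      (P.roots.map fun a => (-C a : ℂ[X])).prod * (t.map fun μ => 1 - C μ * X).prod := by
    rw [hmap, Multiset.prod_map_mul (m := P.roots) (f := fun a => (-C a : ℂ[X]))
      (g := fun a => 1 - C a⁻¹ * X), ht, Multiset.map_map]
    rfl
  have hC : (P.roots.map fun a => (-C a : ℂ[X])).prod = C ((P.roots.map fun a => -a).prod) := by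
    rw [Polynomial.C_eq_algebraMap]
    rw [← Multiset.prod_hom _ (algebraMap ℂ ℂ[X])]
    rw [Multiset.map_map]
    simp [Polynomial.C_eq_algebraMap, map_neg]
  set c : ℂ := P.leadingCoeff * (P.roots.map fun a => -a).prod with hc
  have hPeq : P = C c * (t.map fun μ => 1 - C μ * X).prod := by
    rw [hc, C_mul, mul_assoc, ← hC, ← hq, ← hsplit]
  obtain ⟨⟨q0, q1⟩, q2⟩ := coeff_prod_one_sub t
  have hcoeff : ∀ k, P.coeff k = c * (t.map fun μ => 1 - C μ * X).prod.coeff k := by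
    intro k; rw [hPeq, Polynomial.coeff_C_mul]
  have hc1 : c = 1 := by have := hcoeff 0; rw [h0, q0, mul_one] at this; exact this.symm
  have hco1 : P.coeff 1 = -t.sum := by rw [hcoeff 1, hc1, one_mul, q1]
  have hco2 : P.coeff 1 ^ 2 - 2 * P.coeff 2 = (t.map fun μ => μ ^ 2).sum := by
    rw [hcoeff 1, hcoeff 2, hc1, one_mul, one_mul, q2]
  refine ⟨hz, by rw [hco1, neg_neg], ?_⟩
  rw [hco2, ht, Multiset.map_map]
  congr 1
  apply Multiset.map_congr rfl
  intro a _
  simp [inv_pow]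

lemma double_sum_split (N : ℕ) (f : ℕ → ℕ → ℝ) :
    ∑ n ∈ Finset.range N, ∑ k ∈ Finset.range N, f n k =
      (∑ n ∈ Finset.range N, f n n) +
        ∑ k ∈ Finset.range N, ∑ j ∈ Finset.range k, (f j k + f k j) := by
  induction N with
  | zero => simp
  | succ N ih =>
      simp only [Finset.sum_range_succ, Finset.sum_add_distrib]
      rw [ih]
      simp only [Finset.sum_add_distrib]
      ring

lemma real_final (N : ℕ) (x w v : ℕ → ℝ) (hx : ∀ i j, i < j → j < N → x i < x j) :
    (∑ n ∈ Finset.range N, w n) ^ 2 -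
      2 * ((∑ k ∈ Finset.range N, ∑ j ∈ Finset.range k,
              w k * w j * (1 - Real.exp (x j - x k)))
            - ∑ k ∈ Finset.range N, v k) =
    (∑ n ∈ Finset.range N, ∑ k ∈ Finset.range N,
        Real.exp (-|x n - x k|) * w n * w k)
      + 2 * ∑ n ∈ Finset.range N, v n := by
  have h1 := double_sum_split N (fun n k => w n * w k)
  have h2 := double_sum_split N (fun n k => Real.exp (-|x n - x k|) * w n * w k)
  have hd : ∑ n ∈ Finset.range N, Real.exp (-|x n - x n|) * w n * w n =
      ∑ n ∈ Finset.range N, w n * w n := by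
    apply Finset.sum_congr rfl; intro n _; simp
  have hoff : ∑ k ∈ Finset.range N, ∑ j ∈ Finset.range k,
      (Real.exp (-|x j - x k|) * w j * w k + Real.exp (-|x k - x j|) * w k * w j) =
      ∑ k ∈ Finset.range N, ∑ j ∈ Finset.range k,
        2 * Real.exp (x j - x k) * (w j * w k) := by
    apply Finset.sum_congr rfl; intro k hk
    apply Finset.sum_congr rfl; intro j hj
    have hjk : x j < x k :=
      hx j k (Finset.mem_range.1 hj) (Finset.mem_range.1 hk)
    have habs : |x j - x k| = x k - x j := by
      rw [abs_sub_comm, abs_of_pos (by linarith)]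
    have habs2 : |x k - x j| = x k - x j := abs_of_pos (by linarith)
    rw [habs, habs2, show -(x k - x j) = x j - x k by ring]
    ring
  have hsub : ∑ k ∈ Finset.range N, ∑ j ∈ Finset.range k,
      w k * w j * (1 - Real.exp (x j - x k)) =
      (∑ k ∈ Finset.range N, ∑ j ∈ Finset.range k, w j * w k) -
        ∑ k ∈ Finset.range N, ∑ j ∈ Finset.range k, Real.exp (x j - x k) * (w j * w k) := by
    rw [← Finset.sum_sub_distrib]
    apply Finset.sum_congr rfl; intro k _
    rw [← Finset.sum_sub_distrib]
    apply Finset.sum_congr rfl; intro j _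
    ring
  have hoff1 : ∑ k ∈ Finset.range N, ∑ j ∈ Finset.range k, (w j * w k + w k * w j) =
      2 * ∑ k ∈ Finset.range N, ∑ j ∈ Finset.range k, w j * w k := by
    rw [Finset.mul_sum]
    apply Finset.sum_congr rfl; intro k _
    rw [Finset.mul_sum]
    apply Finset.sum_congr rfl; intro j _
    ring
  have hoff2 : ∑ k ∈ Finset.range N, ∑ j ∈ Finset.range k,
      2 * Real.exp (x j - x k) * (w j * w k) =
      2 * ∑ k ∈ Finset.range N, ∑ j ∈ Finset.range k,
        Real.exp (x j - x k) * (w j * w k) := by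
    rw [Finset.mul_sum]
    apply Finset.sum_congr rfl; intro k _
    rw [Finset.mul_sum]
    apply Finset.sum_congr rfl; intro j _
    ring
  rw [sq, Finset.sum_mul_sum, h1, h2, hd, hoff, hsub, hoff1, hoff2]
  ring

end TraceHelpers

/-- trace formulas. If `P` is the Wronskian polynomial, all of its roots
(counted with multiplicity) are nonzero and `Σ 1/λ = Σ ω_n`,
`Σ 1/λ² = Σ_n Σ_k e^{-|x_n-x_k|} ω_n ω_k + 2 Σ υ_n`. -/
theorem stmt_6 (N : ℕ) (hN : 1 ≤ N) (x w v : ℕ → ℝ)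
    (hx : ∀ i j, i < j → j < N → x i < x j)
    (hv : ∀ n, n < N → 0 ≤ v n) (hnd : ∀ n, n < N → 0 < |w n| + v n)
    (P : Polynomial ℂ) (hP : ∀ z : ℂ, P.eval z = Wron N x w v z) :
    (0 : ℂ) ∉ P.roots ∧
    (P.roots.map fun lam => lam⁻¹).sum = ((∑ n ∈ Finset.range N, w n : ℝ) : ℂ) ∧
    (P.roots.map fun lam => (lam ^ 2)⁻¹).sum =
      ((∑ n ∈ Finset.range N, ∑ k ∈ Finset.range N,
          Real.exp (-|x n - x k|) * w n * w k
        + 2 * ∑ n ∈ Finset.range N, v n : ℝ) : ℂ) := by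
    classical
  obtain ⟨b0, a0, a1, b1, a2⟩ := abP_coeff x w v (N - 1)
  have hN1 : N - 1 + 1 = N := Nat.succ_pred_eq_of_pos hN
  rw [hN1] at a1 b1 a2
  have hPQ : P = Polynomial.C (Complex.exp (-(x (N - 1) : ℂ) / 2)) * (abP x w v (N - 1)).1 := by
    apply Polynomial.funext
    intro z
    rw [hP z, Wron_eq N hN x w v z]
    simp [Polynomial.eval_mul]
  have hFE : Complex.exp (-(x (N - 1) : ℂ) / 2) * Complex.exp ((x (N - 1) : ℂ) / 2) = 1 := by
    rw [← Complex.exp_add, show -(x (N - 1) : ℂ) / 2 + (x (N - 1) : ℂ) / 2 = 0 by ring,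
      Complex.exp_zero]
  have hc0 : P.coeff 0 = 1 := by
    rw [hPQ, Polynomial.coeff_C_mul, a0, hFE]
  have hc1 : P.coeff 1 = -((∑ k ∈ Finset.range N, w k : ℝ) : ℂ) := by
    rw [hPQ, Polynomial.coeff_C_mul, a1]
    push_cast
    linear_combination (-(∑ k ∈ Finset.range N, (w k : ℂ))) * hFE
  have hc2 : P.coeff 2 =
      ((∑ k ∈ Finset.range N, ∑ j ∈ Finset.range k,
          w k * w j * (1 - Real.exp (x j - x k))
        - ∑ k ∈ Finset.range N, v k : ℝ) : ℂ) := by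
    rw [hPQ, Polynomial.coeff_C_mul, a2, ← mul_assoc, hFE, one_mul]
    push_cast
    ring
  obtain ⟨hz, hsum1, hsum2⟩ := roots_sums P hc0
  have key := real_final N x w v hx
  refine ⟨hz, ?_, ?_⟩
  · rw [hsum1, hc1, neg_neg]
  · rw [hsum2, hc1, hc2, ← key]
    push_cast
    ring
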